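/- (Asymptotics of the nonlinearity parameter c) Fix real constants α ≠ 0, q, K₃, K₄, set β = 0, and define N₁(δ) = α − 2 sin²δ [ 2K₃ (2(1+cos²δ) − 3)(2cos²δ − 1)² + K₄ (2cos²δ − 1) ] and N₃(δ) = 4 sin⁴δ ( K₃ (2cos²δ − 1)² + 2q ) (the modified-fiber coefficients with β = 0). Then the nonlinearity parameter c(δ) = N₃(δ)/N₁(δ) is defined for all sufficiently small δ and satisfies c(δ) = (4/α)( K₃ + 2q ) δ⁴ + O(δ⁶) as δ → 0. -/

import Mathlib

noncomputable section

open Real Filter Asymptotics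

/-- Coefficient `N₁(δ)` of the modified-fiber wave equation at pitch angle `β = 0`. -/
def N1h (α K₃ K₄ : ℝ) (δ : ℝ) : ℝ :=
  α - 2 * Real.sin δ ^ 2 *
    (2 * K₃ * (2 * (1 + Real.cos δ ^ 2) - 3) * (2 * Real.cos δ ^ 2 - 1) ^ 2
      + K₄ * (2 * Real.cos δ ^ 2 - 1))

/-- Coefficient `N₃(δ)` of the modified-fiber wave equation at pitch angle `β = 0`. -/
def N3h (q K₃ : ℝ) (δ : ℝ) : ℝ :=
  4 * Real.sin δ ^ 4 * (K₃ * (2 * Real.cos δ ^ 2 - 1) ^ 2 + 2 * q)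

/-- `sin δ - δ = O(δ³)` near `0`. -/
lemma sin_sub_id_isBigO : (fun δ : ℝ => Real.sin δ - δ) =O[nhds 0] fun δ => δ ^ 3 := by
  rw [Asymptotics.isBigO_iff]
  refine ⟨1, ?_⟩
  filter_upwards [Metric.ball_mem_nhds (0 : ℝ) one_pos] with δ hδ
  simp only [Metric.mem_ball, Real.dist_eq, sub_zero] at hδ
  have hδ1 : |δ| ≤ 1 := le_of_lt hδ
  have h1 := Real.sin_bound hδ1
  have h2 : Real.sin δ - δ = (Real.sin δ - (δ - δ ^ 3 / 6)) + (- δ ^ 3 / 6) := by ring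
  have h3 : |Real.sin δ - δ| ≤ |δ| ^ 4 * (5 / 96) + |δ| ^ 3 / 6 := by
    rw [h2]
    refine le_trans (abs_add_le _ _) (add_le_add (h1.trans (by nlinarith [mul_le_mul_of_nonneg_left hδ1 (pow_nonneg (abs_nonneg δ) 4), pow_nonneg (abs_nonneg δ) 4])) ?_)
    rw [abs_div, abs_neg, abs_pow]
    norm_num
  have h4 : |δ| ^ 4 ≤ |δ| ^ 3 := by
    have := abs_nonneg δ
    calc |δ| ^ 4 = |δ| ^ 3 * |δ| := by ring
      _ ≤ |δ| ^ 3 * 1 := by gcongr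
      _ = |δ| ^ 3 := by ring
  have : |Real.sin δ - δ| ≤ |δ| ^ 3 := by nlinarith [abs_nonneg δ, pow_nonneg (abs_nonneg δ) 3]
  simpa [abs_pow] using this

lemma sin_isBigO : (fun δ : ℝ => Real.sin δ) =O[nhds 0] fun δ => δ := by
  refine Asymptotics.isBigO_of_le _ fun x => ?_
  simpa using Real.abs_sin_le_abs

/-- **asymptotics of the nonlinearity parameter `c`.** For `α ≠ 0` and
`β = 0`, the nonlinearity parameter `c(δ) = N₃(δ)/N₁(δ)` is defined (i.e. `N₁(δ) ≠ 0`)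
for all sufficiently small `δ`, and
`c(δ) = (4/α)(K₃ + 2q) δ⁴ + O(δ⁶)` as `δ → 0`. -/
theorem nonlinearity_parameter_asymptotics
    (α q K₃ K₄ : ℝ) (hα : α ≠ 0) :
    (∀ᶠ δ in nhds (0 : ℝ), N1h α K₃ K₄ δ ≠ 0) ∧
    ((fun δ => N3h q K₃ δ / N1h α K₃ K₄ δ - (4 / α) * (K₃ + 2 * q) * δ ^ 4)
      =O[nhds 0] fun δ => δ ^ 6) := by
  have hN1cont : Continuous (N1h α K₃ K₄) := by unfold N1h; fun_prop
  have hN10 : N1h α K₃ K₄ 0 = α := by simp [N1h]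
  have hne : ∀ᶠ δ in nhds (0 : ℝ), N1h α K₃ K₄ δ ≠ 0 := by
    have : ContinuousAt (N1h α K₃ K₄) 0 := hN1cont.continuousAt
    exact this.eventually_ne (by rw [hN10]; exact hα)
  refine ⟨hne, ?_⟩
  set C : ℝ := (4 / α) * (K₃ + 2 * q) with hC
  -- numerator
  set num : ℝ → ℝ := fun δ => N3h q K₃ δ - C * δ ^ 4 * N1h α K₃ K₄ δ with hnum
  -- bounded continuous factors
  have hOone : ∀ f : ℝ → ℝ, Continuous f → f =O[nhds (0:ℝ)] (fun _ => (1:ℝ)) := by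
    intro f hf
    exact (hf.tendsto 0).isBigO_one ℝ
  -- sin⁴ - δ⁴ = O(δ⁶)
  have hA : (fun δ : ℝ => Real.sin δ ^ 4 - δ ^ 4) =O[nhds 0] fun δ => δ ^ 6 := by
    have h1 : (fun δ : ℝ => (Real.sin δ - δ) * (Real.sin δ + δ) * (Real.sin δ ^ 2 + δ ^ 2))
        =O[nhds 0] fun δ => δ ^ 3 * δ * δ ^ 2 :=
      (sin_sub_id_isBigO.mul (sin_isBigO.add (isBigO_refl _ _))).mul
        ((sin_isBigO.pow 2).add (isBigO_refl _ _))
    have e1 : (fun δ : ℝ => (Real.sin δ - δ) * (Real.sin δ + δ) * (Real.sin δ ^ 2 + δ ^ 2))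
        = fun δ : ℝ => Real.sin δ ^ 4 - δ ^ 4 := by funext δ; ring
    have e2 : (fun δ : ℝ => δ ^ 3 * δ * δ ^ 2) = fun δ : ℝ => δ ^ 6 := by funext δ; ring
    rwa [e1, e2] at h1
  -- δ⁴ sin² * (continuous) = O(δ⁶)
  have hB : ∀ f : ℝ → ℝ, Continuous f →
      (fun δ : ℝ => δ ^ 4 * Real.sin δ ^ 2 * f δ) =O[nhds 0] fun δ => δ ^ 6 := by
    intro f hf
    have h1 : (fun δ : ℝ => δ ^ 4 * Real.sin δ ^ 2 * f δ)
        =O[nhds 0] fun δ => δ ^ 4 * δ ^ 2 * 1 :=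
      ((isBigO_refl (fun δ : ℝ => δ ^ 4) _).mul (sin_isBigO.pow 2)).mul (hOone f hf)
    have e2 : (fun δ : ℝ => δ ^ 4 * δ ^ 2 * 1) = fun δ : ℝ => δ ^ 6 := by funext δ; ring
    rwa [e2] at h1
  -- num = O(δ⁶)
  have hnumO : num =O[nhds 0] fun δ => δ ^ 6 := by
    have hid : ∀ δ : ℝ, num δ =
        4 * (Real.sin δ ^ 4 - δ ^ 4) * (K₃ * (2 * Real.cos δ ^ 2 - 1) ^ 2 + 2 * q)
        + δ ^ 4 * Real.sin δ ^ 2 * (-8 * K₃ * (2 * Real.cos δ ^ 2 - 1 + 1))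
        + δ ^ 4 * Real.sin δ ^ 2 *
            (2 * C * (2 * K₃ * (2 * (1 + Real.cos δ ^ 2) - 3) * (2 * Real.cos δ ^ 2 - 1) ^ 2
              + K₄ * (2 * Real.cos δ ^ 2 - 1))) := by
      intro δ
      have hs : Real.sin δ ^ 2 = 1 - Real.cos δ ^ 2 := by
        rw [Real.sin_sq]
      simp only [hnum, hC, N3h, N1h]
      field_simp
      linear_combination (16 * α * K₃ * δ ^ 4 * Real.cos δ ^ 2) * hs
    have h1 : (fun δ => 4 * (Real.sin δ ^ 4 - δ ^ 4) *
          (K₃ * (2 * Real.cos δ ^ 2 - 1) ^ 2 + 2 * q)) =O[nhds 0] fun δ => δ ^ 6 := by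
      have := (hA.const_mul_left 4).mul
        (hOone (fun δ => K₃ * (2 * Real.cos δ ^ 2 - 1) ^ 2 + 2 * q) (by fun_prop))
      simpa using this
    have h2 := hB (fun δ => -8 * K₃ * (2 * Real.cos δ ^ 2 - 1 + 1)) (by fun_prop)
    have h3 := hB (fun δ =>
        2 * C * (2 * K₃ * (2 * (1 + Real.cos δ ^ 2) - 3) * (2 * Real.cos δ ^ 2 - 1) ^ 2
          + K₄ * (2 * Real.cos δ ^ 2 - 1))) (by fun_prop)
    have := (h1.add h2).add h3
    refine this.congr' (Filter.Eventually.of_forall fun δ => (hid δ).symm) ?_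
    exact Filter.Eventually.of_forall fun δ => rfl
  -- 1/N1 = O(1)
  have hinv : (fun δ => (N1h α K₃ K₄ δ)⁻¹) =O[nhds (0:ℝ)] (fun _ => (1:ℝ)) := by
    have ht : Filter.Tendsto (fun δ => (N1h α K₃ K₄ δ)⁻¹) (nhds 0) (nhds α⁻¹) := by
      have := (hN1cont.tendsto 0).inv₀ (by rw [hN10]; exact hα)
      rwa [hN10] at this
    exact ht.isBigO_one ℝ
  have hfinal := hnumO.mul hinv
  have e : (fun δ : ℝ => δ ^ 6 * 1) = fun δ : ℝ => δ ^ 6 := by funext δ; ring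
  rw [e] at hfinal
  refine hfinal.congr' ?_ (Filter.Eventually.of_forall fun δ => rfl)
  filter_upwards [hne] with δ hδ
  field_simp [hnum]
  ring
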